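/- Let F be a subfield of the complex numbers and let θ ∈ ℂ be a root of unity whose minimal polynomial over F has degree 2, say X² + bX + c with b, c ∈ F. Then the constant coefficient c is itself a root of unity (in particular, c is an algebraic unit). -/

import Mathlib

open Polynomial

set_option synthInstance.maxHeartbeats 400000 in
/-- If `θ ∈ ℂ` is a root of unity whose minimal polynomial over a subfield `F ⊆ ℂ` is the
quadratic `X² + bX + c`, then the constant coefficient `c` is itself a root of unity; in
particular `c` is an algebraic unit (both `c` and `c⁻¹` are integral over `ℤ`). -/
theorem stmt_7 (F : Subfield ℂ) (θ : ℂ) (b c : F)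
    (hθ : ∃ n : ℕ, 0 < n ∧ θ ^ n = 1)
    (hmin : minpoly F θ = X ^ 2 + C b * X + C c) :
    (∃ n : ℕ, 0 < n ∧ (c : ℂ) ^ n = 1) ∧
      IsIntegral ℤ (c : ℂ) ∧ IsIntegral ℤ ((c : ℂ)⁻¹) := by
  obtain ⟨n, hn, hθn⟩ := hθ
  have hθroot : θ ^ 2 + (b : ℂ) * θ + (c : ℂ) = 0 := by
    have h := minpoly.aeval F θ
    rw [hmin] at h
    simp at h; exact h
  set θ' : ℂ := -(b : ℂ) - θ with hθ'def
  have hc : (c : ℂ) = θ * θ' := by rw [hθ'def]; linear_combination hθroot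
  have hθ'root : θ' ^ 2 + (b : ℂ) * θ' + (c : ℂ) = 0 := by
    rw [hθ'def]; linear_combination hθroot
  have hdvd : minpoly F θ ∣ (X ^ n - 1 : F[X]) := minpoly.dvd F θ (by simp [hθn])
  obtain ⟨q, hq⟩ := hdvd
  have hθ'n : θ' ^ n = 1 := by
    have h0 : (aeval θ') ((X : F[X]) ^ n - 1) = 0 := by
      rw [hq, hmin, map_mul]
      have h1 : (aeval θ') ((X : F[X]) ^ 2 + C b * X + C c) = 0 := by
        simp; exact hθ'root
      rw [h1, zero_mul]
    have := h0
    simp only [map_sub, map_pow, aeval_X, map_one, sub_eq_zero] at this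
    exact this
  have hcn : (c : ℂ) ^ n = 1 := by rw [hc, mul_pow, hθn, hθ'n, one_mul]
  have hc0 : (c : ℂ) ≠ 0 := by
    intro h; rw [h] at hcn; simp [zero_pow hn.ne'] at hcn
  have hci : ((c : ℂ)⁻¹) ^ n = 1 := by
    rw [inv_pow, hcn, inv_one]
  refine ⟨⟨n, hn, hcn⟩, ?_, ?_⟩
  · exact IsIntegral.of_pow hn (hcn ▸ isIntegral_one)
  · exact IsIntegral.of_pow hn (hci ▸ isIntegral_one)
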